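/- For every natural number ℓ ≥ 1, in ℤ[y,y⁻¹,z,z⁻¹][[q]] one has ∏_{ε₁,ε₂∈{±1}}(1 − q y^{ε₁} z^{ε₂}) · ∑_{k=0}^{ℓ−1} ∑_{σ=0}^{∞} q^{2k+σ} χ_σ(y) χ_σ(z) = 1 − q^{2ℓ}. (so(2)⊕so(4) decomposition of the order-ℓ scalar singleton Rac_ℓ of so(2,4).) -/

import Mathlib

open LaurentPolynomial Finset

noncomputable def chi (R : Type*) [CommRing R] (n : ℕ) : LaurentPolynomial R :=
  ∑ k ∈ Finset.range (n + 1), LaurentPolynomial.T ((n : ℤ) - 2 * k)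

lemma chi_zero (R : Type*) [CommRing R] : chi R 0 = 1 := by
  simp [chi, T_zero]

lemma chi_one (R : Type*) [CommRing R] : chi R 1 = T 1 + T (-1) := by
  rw [chi, Finset.sum_range_succ, Finset.sum_range_one]
  norm_num

lemma chi_rec (R : Type*) [CommRing R] (n : ℕ) :
    chi R (n + 2) = chi R 1 * chi R (n + 1) - chi R n := by
  rw [chi_one]
  have h1 : T (1:ℤ) * chi R (n+1) = ∑ k ∈ Finset.range (n + 2), T (((n:ℤ)+2) - 2*k) := by
    rw [chi, Finset.mul_sum]
    refine Finset.sum_congr rfl fun k _ => ?_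
    rw [← T_add]; congr 1; push_cast; ring
  have h2 : T (-1:ℤ) * chi R (n+1) = ∑ k ∈ Finset.range (n + 2), T ((n:ℤ) - 2*k) := by
    rw [chi, Finset.mul_sum]
    refine Finset.sum_congr rfl fun k _ => ?_
    rw [← T_add]; congr 1; push_cast; ring
  have h3 : ∑ k ∈ Finset.range (n + 2), T (R := R) ((n:ℤ) - 2*k) =
      chi R n + T ((n:ℤ) - 2*(n+1)) := by
    rw [Finset.sum_range_succ,
      show ((n:ℤ) - 2 * ((n+1:ℕ):ℤ)) = (n:ℤ) - 2*((n:ℤ)+1) by push_cast; ring]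
    rfl
  have h4 : chi R (n+2) = (∑ k ∈ Finset.range (n + 2), T (R := R) (((n:ℤ)+2) - 2*k))
      + T ((n:ℤ) - 2*(n+1)) := by
    have : chi R (n+2) = ∑ k ∈ Finset.range (n + 3), T (R := R) (((n:ℤ)+2) - 2*k) := by
      rw [chi]
      refine Finset.sum_congr rfl fun k _ => ?_
      congr 1 <;> (push_cast; ring)
    rw [this, Finset.sum_range_succ,
      show (((n:ℤ)+2) - 2*((n+2:ℕ):ℤ)) = (n:ℤ) - 2*((n:ℤ)+1) by push_cast; ring]
  rw [add_mul, h1, h2, h3, h4]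
  ring

/-- The two-variable Laurent polynomial ring ℤ[y,y⁻¹,z,z⁻¹], realised as
Laurent polynomials in `z` over Laurent polynomials in `y`. -/
noncomputable abbrev L2 : Type := LaurentPolynomial (LaurentPolynomial ℤ)

/-- The su(2) character `χ_n(y) = ∑_{k=0}^n y^{n-2k}`, in the variable `y`. -/
noncomputable def chiY (n : ℕ) : L2 :=
  LaurentPolynomial.C (∑ k ∈ Finset.range (n + 1), LaurentPolynomial.T ((n : ℤ) - 2 * k))

/-- The su(2) character `χ_n(z) = ∑_{k=0}^n z^{n-2k}`, in the variable `z`. -/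
noncomputable def chiZv (n : ℕ) : L2 :=
  ∑ k ∈ Finset.range (n + 1), LaurentPolynomial.T ((n : ℤ) - 2 * k)

/-- `y^{ε₁} z^{ε₂}` as an element of ℤ[y,y⁻¹,z,z⁻¹]. -/
noncomputable def yz (e₁ e₂ : ℤ) : L2 :=
  LaurentPolynomial.C (LaurentPolynomial.T e₁) * LaurentPolynomial.T e₂

/-- `∏_{ε₁,ε₂∈{±1}} (1 - q y^{ε₁} z^{ε₂})`, the inverse of the universal AdS₅
function `P₄(q,y,z)`, in ℤ[y,y⁻¹,z,z⁻¹][[q]]. -/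
noncomputable def P4inv : PowerSeries L2 :=
  (1 - PowerSeries.C (yz 1 1) * PowerSeries.X) *
  (1 - PowerSeries.C (yz 1 (-1)) * PowerSeries.X) *
  (1 - PowerSeries.C (yz (-1) 1) * PowerSeries.X) *
  (1 - PowerSeries.C (yz (-1) (-1)) * PowerSeries.X)


open LaurentPolynomial Finset PowerSeries

lemma chiY_def' (n : ℕ) : chiY n = LaurentPolynomial.C (chi ℤ n) := rfl
lemma chiZv_def' (n : ℕ) : chiZv n = chi (LaurentPolynomial ℤ) n := rfl

lemma chiY_zero : chiY 0 = 1 := by rw [chiY_def', chi_zero, map_one]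
lemma chiZv_zero : chiZv 0 = 1 := chi_zero _
lemma chiY_rec (n : ℕ) : chiY (n + 2) = chiY 1 * chiY (n + 1) - chiY n := by
  simp only [chiY_def', chi_rec, map_sub, map_mul]
lemma chiZv_rec (n : ℕ) : chiZv (n + 2) = chiZv 1 * chiZv (n + 1) - chiZv n :=
  chi_rec _ n
lemma chiY_two : chiY 2 = chiY 1 * chiY 1 - 1 := by
  have := chiY_rec 0; rwa [chiY_zero] at this
lemma chiZv_two : chiZv 2 = chiZv 1 * chiZv 1 - 1 := by
  have := chiZv_rec 0; rwa [chiZv_zero] at this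

noncomputable def e1 : L2 := chiY 1 * chiZv 1
noncomputable def e2 : L2 := chiY 2 + chiZv 2

lemma quartic (n : ℕ) :
    chiY (n+4) * chiZv (n+4) - e1 * (chiY (n+3) * chiZv (n+3))
      + e2 * (chiY (n+2) * chiZv (n+2)) - e1 * (chiY (n+1) * chiZv (n+1))
      + chiY n * chiZv n = 0 := by
  have hy4 : chiY (n+4) = chiY 1 * chiY (n+3) - chiY (n+2) := chiY_rec (n+2)
  have hy3 : chiY (n+3) = chiY 1 * chiY (n+2) - chiY (n+1) := chiY_rec (n+1)
  have hy2 : chiY (n+2) = chiY 1 * chiY (n+1) - chiY n := chiY_rec n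
  have hz4 : chiZv (n+4) = chiZv 1 * chiZv (n+3) - chiZv (n+2) := chiZv_rec (n+2)
  have hz3 : chiZv (n+3) = chiZv 1 * chiZv (n+2) - chiZv (n+1) := chiZv_rec (n+1)
  have hz2 : chiZv (n+2) = chiZv 1 * chiZv (n+1) - chiZv n := chiZv_rec n
  unfold e1 e2
  rw [hy4, hz4, hy3, hz3, hy2, hz2, chiY_two, chiZv_two]
  ring

lemma yz_mul (a b c d : ℤ) : yz a b * yz c d = yz (a + c) (b + d) := by
  simp only [yz, T_add, map_mul]; ring

lemma yz_zero : yz 0 0 = 1 := by simp [yz, T_zero]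

lemma e1_eq : e1 = yz 1 1 + yz 1 (-1) + yz (-1) 1 + yz (-1) (-1) := by
  unfold e1 yz
  rw [chiY_def', chiZv_def', chi_one, chi_one]
  simp only [map_add]
  ring

lemma chi_two (R : Type*) [CommRing R] : chi R 2 = T 2 + 1 + T (-2) := by
  rw [chi, Finset.sum_range_succ, Finset.sum_range_succ, Finset.sum_range_one]
  norm_num [T_zero]

lemma e2_eq : e2 =
    yz 1 1 * yz 1 (-1) + yz 1 1 * yz (-1) 1 + yz 1 1 * yz (-1) (-1)
    + yz 1 (-1) * yz (-1) 1 + yz 1 (-1) * yz (-1) (-1) + yz (-1) 1 * yz (-1) (-1) := by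
  simp only [yz_mul]
  norm_num
  unfold e2 yz
  rw [chiY_def', chiZv_def', chi_two, chi_two]
  simp only [map_add, map_one, T_zero, mul_one, one_mul]
  ring

lemma e3_eq : e1 = yz 1 1 * yz 1 (-1) * yz (-1) 1 + yz 1 1 * yz 1 (-1) * yz (-1) (-1)
    + yz 1 1 * yz (-1) 1 * yz (-1) (-1) + yz 1 (-1) * yz (-1) 1 * yz (-1) (-1) := by
  simp only [yz_mul]
  norm_num
  rw [e1_eq]

lemma e4_eq : (1 : L2) = yz 1 1 * yz 1 (-1) * yz (-1) 1 * yz (-1) (-1) := by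
  simp only [yz_mul]
  norm_num [yz_zero]

lemma P4inv_eq : P4inv = 1 - PowerSeries.C e1 * X + PowerSeries.C e2 * X^2
    - PowerSeries.C e1 * X^3 + X^4 := by
  have expand : P4inv = 1
      - PowerSeries.C (yz 1 1 + yz 1 (-1) + yz (-1) 1 + yz (-1) (-1)) * X
      + PowerSeries.C (yz 1 1 * yz 1 (-1) + yz 1 1 * yz (-1) 1 + yz 1 1 * yz (-1) (-1)
          + yz 1 (-1) * yz (-1) 1 + yz 1 (-1) * yz (-1) (-1) + yz (-1) 1 * yz (-1) (-1)) * X^2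
      - PowerSeries.C (yz 1 1 * yz 1 (-1) * yz (-1) 1 + yz 1 1 * yz 1 (-1) * yz (-1) (-1)
          + yz 1 1 * yz (-1) 1 * yz (-1) (-1) + yz 1 (-1) * yz (-1) 1 * yz (-1) (-1)) * X^3
      + PowerSeries.C (yz 1 1 * yz 1 (-1) * yz (-1) 1 * yz (-1) (-1)) * X^4 := by
    rw [P4inv]
    simp only [map_add, map_mul]
    ring
  rw [expand, ← e1_eq, ← e2_eq, ← e3_eq, ← e4_eq, map_one, one_mul]

/-- the generating series `∑ χ_σ(y)χ_σ(z) q^σ` -/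
noncomputable def G : PowerSeries L2 := PowerSeries.mk fun n => chiY n * chiZv n

lemma key : P4inv * G = 1 - X ^ 2 := by
  have h : P4inv * G = G - PowerSeries.C e1 * (G * X^1) + PowerSeries.C e2 * (G * X^2)
      - PowerSeries.C e1 * (G * X^3) + G * X^4 := by
    rw [P4inv_eq]; ring
  rw [h]
  apply PowerSeries.ext
  intro n
  simp only [map_sub, map_add, coeff_C_mul, coeff_mul_X_pow', coeff_one, coeff_X_pow, G,
    coeff_mk]
  match n with
  | 0 => simp [chiY_zero, chiZv_zero]
  | 1 => simp [e1, chiY_zero, chiZv_zero]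
  | 2 =>
    norm_num [e1, e2, chiY_zero, chiZv_zero, chiY_two, chiZv_two]
    ring
  | 3 =>
    norm_num [e1, e2, chiY_zero, chiZv_zero]
    have hy3 : chiY 3 = chiY 1 * chiY 2 - chiY 1 := chiY_rec 1
    have hz3 : chiZv 3 = chiZv 1 * chiZv 2 - chiZv 1 := chiZv_rec 1
    rw [hy3, hz3, chiY_two, chiZv_two]
    ring
  | (m+4) =>
    have h1 : (1:ℕ) ≤ m + 4 := by omega
    have h2 : (2:ℕ) ≤ m + 4 := by omega
    have h3 : (3:ℕ) ≤ m + 4 := by omega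
    have h4 : (4:ℕ) ≤ m + 4 := by omega
    have hne0 : ¬ (m + 4 = 0) := by omega
    have hne2 : ¬ (m + 4 = 2) := by omega
    simp only [if_pos h1, if_pos h2, if_pos h3, if_pos h4, if_neg hne0, if_neg hne2,
      show m + 4 - 1 = m + 3 from rfl, show m + 4 - 2 = m + 2 from rfl,
      show m + 4 - 3 = m + 1 from rfl, show m + 4 - 4 = m from rfl]
    have := quartic m
    linear_combination this


/-- so(2)⊕so(4) decomposition of the order-ℓ scalar singleton `Rac_ℓ` of so(2,4):
`∏_{ε₁,ε₂}(1 - q y^{ε₁}z^{ε₂}) · ∑_{k=0}^{ℓ-1} ∑_{σ≥0} q^{2k+σ} χ_σ(y)χ_σ(z) = 1 - q^{2ℓ}`. -/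
theorem rac_ell_so24_decomposition (ℓ : ℕ) (hℓ : 1 ≤ ℓ) :
    P4inv * PowerSeries.mk (fun m =>
      ∑ k ∈ Finset.range ℓ, if 2 * k ≤ m then chiY (m - 2 * k) * chiZv (m - 2 * k) else 0) =
    1 - PowerSeries.X ^ (2 * ℓ) := by
  have hmk : PowerSeries.mk (fun m =>
      ∑ k ∈ Finset.range ℓ, if 2 * k ≤ m then chiY (m - 2 * k) * chiZv (m - 2 * k) else 0)
      = (∑ k ∈ Finset.range ℓ, (X:PowerSeries L2) ^ (2*k)) * G := by
    apply PowerSeries.ext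
    intro n
    rw [Finset.sum_mul, map_sum]
    simp only [coeff_mk]
    refine Finset.sum_congr rfl fun k _ => ?_
    rw [mul_comm ((X:PowerSeries L2) ^ (2*k)) G, coeff_mul_X_pow']
    simp [G]
  rw [hmk, ← mul_assoc, mul_comm P4inv, mul_assoc, key]
  have : (∑ k ∈ Finset.range ℓ, (X:PowerSeries L2) ^ (2*k)) * (1 - X^2)
      = 1 - X ^ (2*ℓ) := by
    have hg := geom_sum_mul ((X:PowerSeries L2)^2) ℓ
    simp only [← pow_mul] at hg
    have : ∀ k, ((X:PowerSeries L2)^2)^k = X^(2*k) := fun k => by rw [← pow_mul]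
    calc (∑ k ∈ Finset.range ℓ, (X:PowerSeries L2) ^ (2*k)) * (1 - X^2)
        = -((∑ k ∈ Finset.range ℓ, ((X:PowerSeries L2)^2)^k) * (X^2 - 1)) := by
          simp only [this]; ring
      _ = 1 - X ^ (2*ℓ) := by rw [geom_sum_mul, ← pow_mul]; ring
  rw [this]
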